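/- Let X be a complete p-uniformly convex metric space with parameter k > 0, let K be a nonempty bounded closed convex subset of X, and let T : K → X be continuous and of convex type, with inf{d(x, T x) : x ∈ K} = 0. Then T has a fixed point in K: there exists x ∈ K with T x = x. -/

import Mathlib

open Filter Topology

/-- In a complete `p`-uniformly convex space with parameter `k > 0`, a continuous map
`T` of convex type on a nonempty bounded closed convex set `K` with
`inf {dist x (T x) : x ∈ K} = 0` has a fixed point in `K`. -/
theorem convex_type_fixed_point
    {X : Type*} [MetricSpace X] [CompleteSpace X]
    (p k : ℝ) (hp : 1 ≤ p) (hk : 0 < k)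
    (geo : ∀ x y : X, ∃ m : X, dist x m = dist x y / 2 ∧ dist m y = dist x y / 2)
    (puc : ∀ x y z m : X,
      dist x m = dist x y / 2 → dist m y = dist x y / 2 →
      dist z m ^ p ≤ (1 / 2) * dist z x ^ p + (1 / 2) * dist z y ^ p
        - (k / 8) * dist x y ^ p)
    (K : Set X) (hK : K.Nonempty) (hKb : Bornology.IsBounded K) (hKcl : IsClosed K)
    (hKconv : ∀ x ∈ K, ∀ y ∈ K, ∀ m : X,
      dist x m = dist x y / 2 → dist m y = dist x y / 2 → m ∈ K)
    (T : X → X) (hTc : ContinuousOn T K)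
    (hconvtype : ∀ xn yn mn : ℕ → X,
      (∀ n, xn n ∈ K) → (∀ n, yn n ∈ K) →
      (∀ n, dist (xn n) (mn n) = dist (xn n) (yn n) / 2 ∧
        dist (mn n) (yn n) = dist (xn n) (yn n) / 2) →
      Filter.Tendsto (fun n => dist (xn n) (T (xn n))) Filter.atTop (nhds 0) →
      Filter.Tendsto (fun n => dist (yn n) (T (yn n))) Filter.atTop (nhds 0) →
      Filter.Tendsto (fun n => dist (mn n) (T (mn n))) Filter.atTop (nhds 0))
    (hinf : ⨅ x : K, dist (x : X) (T x) = 0) :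
    ∃ x ∈ K, T x = x := by
  classical
  have hp0 : (0:ℝ) < p := lt_of_lt_of_le one_pos hp
  have hk8 : (0:ℝ) < k/8 := by positivity
  haveI : Nonempty K := hK.to_subtype
  -- approximate fixed points exist at every level
  have hA : ∀ ε : ℝ, 0 < ε → ∃ x, x ∈ K ∧ dist x (T x) ≤ ε := by
    intro ε hε
    have h1 : (⨅ x : K, dist (x : X) (T x)) < ε := by rw [hinf]; exact hε
    obtain ⟨⟨x, hx⟩, hlt⟩ := exists_lt_of_ciInf_lt h1
    exact ⟨x, hx, hlt.le⟩
  -- modulus: midpoints of good approximate fixed points are approximate fixed points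
  have hmod : ∀ θ : ℝ, 0 < θ → ∃ ε : ℝ, 0 < ε ∧
      ∀ x, x ∈ K → ∀ y, y ∈ K → dist x (T x) ≤ ε → dist y (T y) ≤ ε →
        ∀ m : X, dist x m = dist x y / 2 → dist m y = dist x y / 2 →
          dist m (T m) ≤ θ := by
    intro θ hθ
    by_contra hcon
    push_neg at hcon
    have hseq : ∀ n : ℕ, ∃ q : X × X × X, q.1 ∈ K ∧ q.2.1 ∈ K ∧
        dist q.1 (T q.1) ≤ 1/((n:ℝ)+1) ∧ dist q.2.1 (T q.2.1) ≤ 1/((n:ℝ)+1) ∧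
        dist q.1 q.2.2 = dist q.1 q.2.1 / 2 ∧ dist q.2.2 q.2.1 = dist q.1 q.2.1 / 2 ∧
        θ < dist q.2.2 (T q.2.2) := by
      intro n
      obtain ⟨x, hx, y, hy, h1, h2, m, hm1, hm2, hm3⟩ := hcon (1/((n:ℝ)+1)) (by positivity)
      exact ⟨⟨x, y, m⟩, hx, hy, h1, h2, hm1, hm2, hm3⟩
    choose q hq1 hq2 hq3 hq4 hq5 hq6 hq7 using hseq
    have t1 : Tendsto (fun n => dist ((q n).1) (T ((q n).1))) atTop (nhds 0) :=
      squeeze_zero (fun _ => dist_nonneg) hq3 tendsto_one_div_add_atTop_nhds_zero_nat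
    have t2 : Tendsto (fun n => dist ((q n).2.1) (T ((q n).2.1))) atTop (nhds 0) :=
      squeeze_zero (fun _ => dist_nonneg) hq4 tendsto_one_div_add_atTop_nhds_zero_nat
    have t3 := hconvtype (fun n => (q n).1) (fun n => (q n).2.1) (fun n => (q n).2.2)
      hq1 hq2 (fun n => ⟨hq5 n, hq6 n⟩) t1 t2
    obtain ⟨n, hn⟩ := (t3.eventually (gt_mem_nhds hθ)).exists
    exact absurd hn (not_lt.2 (hq7 n).le)
  choose F hF0 hFP using hmod
  set G : ℝ → ℝ := fun θ => if h : 0 < θ then F θ h else 1 with hGdef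
  have hG0 : ∀ θ, 0 < θ → 0 < G θ := by
    intro θ hθ; simp only [hGdef, dif_pos hθ]; exact hF0 θ hθ
  have hGP : ∀ θ (hθ : 0 < θ),
      ∀ x, x ∈ K → ∀ y, y ∈ K → dist x (T x) ≤ G θ → dist y (T y) ≤ G θ →
        ∀ m : X, dist x m = dist x y / 2 → dist m y = dist x y / 2 →
          dist m (T m) ≤ θ := by
    intro θ hθ; simp only [hGdef, dif_pos hθ]; exact hFP θ hθ
  -- the decreasing sequence of levels
  set eps : ℕ → ℝ := fun n =>
    Nat.rec (motive := fun _ => ℝ) 1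
      (fun m e => min (min e (1/((m:ℝ)+1))) (G e)) n with hepsdef
  have eps_succ : ∀ n, eps (n+1) = min (min (eps n) (1/((n:ℝ)+1))) (G (eps n)) :=
    fun _ => rfl
  have eps_pos : ∀ n, 0 < eps n := by
    intro n
    induction n with
    | zero => exact one_pos
    | succ m ih =>
      rw [eps_succ]
      exact lt_min (lt_min ih (by positivity)) (hG0 _ ih)
  have eps_anti : Antitone eps := by
    apply antitone_nat_of_succ_le
    intro n
    rw [eps_succ]
    exact le_trans (min_le_left _ _) (min_le_left _ _)
  have eps_le : ∀ n : ℕ, eps (n+1) ≤ 1/((n:ℝ)+1) := by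
    intro n
    rw [eps_succ]
    exact le_trans (min_le_left _ _) (min_le_right _ _)
  have eps_G : ∀ n : ℕ, eps (n+1) ≤ G (eps n) := by
    intro n; rw [eps_succ]; exact min_le_right _ _
  -- the approximate fixed point sets
  set A : ℕ → Set X := fun n => {x | x ∈ K ∧ dist x (T x) ≤ eps n} with hAdef
  have hAne : ∀ n, (A n).Nonempty := fun n => hA (eps n) (eps_pos n)
  have hAmono : ∀ {n m : ℕ}, n ≤ m → A m ⊆ A n := by
    intro n m hnm x hx
    exact ⟨hx.1, hx.2.trans (eps_anti hnm)⟩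
  -- the variational argument
  obtain ⟨z₀, hz₀⟩ := hK
  set S : ℕ → Set ℝ := fun n => (fun x => dist z₀ x ^ p) '' A n with hSdef
  have hSne : ∀ n, (S n).Nonempty := fun n => (hAne n).image _
  have hSbd : ∀ n, BddBelow (S n) := by
    rintro n
    refine ⟨0, ?_⟩
    rintro a ⟨x, _, rfl⟩
    exact Real.rpow_nonneg dist_nonneg p
  set I : ℕ → ℝ := fun n => sInf (S n) with hIdef
  have hImono : Monotone I := by
    intro n m hnm
    exact csInf_le_csInf (hSbd n) (hSne m) (Set.image_mono (hAmono hnm))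
  obtain ⟨C, hC⟩ := Metric.isBounded_iff.mp hKb
  have hIbdd : BddAbove (Set.range I) := by
    refine ⟨C ^ p, ?_⟩
    rintro a ⟨n, rfl⟩
    obtain ⟨x, hxA⟩ := hAne n
    calc I n ≤ dist z₀ x ^ p := csInf_le (hSbd n) ⟨x, hxA, rfl⟩
      _ ≤ C ^ p := Real.rpow_le_rpow dist_nonneg (hC hz₀ hxA.1) hp0.le
  set R : ℝ := ⨆ n, I n with hRdef
  have hIR : Tendsto I atTop (nhds R) := tendsto_atTop_ciSup hImono hIbdd
  have hIleR : ∀ n, I n ≤ R := fun n => le_ciSup hIbdd n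
  -- choose near-minimizers
  have hmin : ∀ n : ℕ, ∃ x, x ∈ A n ∧ dist z₀ x ^ p < I n + 1/((n:ℝ)+1) := by
    intro n
    have : sInf (S n) < I n + 1/((n:ℝ)+1) := by
      have : (0:ℝ) < 1/((n:ℝ)+1) := by positivity
      simp only [hIdef]; linarith
    obtain ⟨a, ⟨x, hxA, rfl⟩, ha⟩ := exists_lt_of_csInf_lt (hSne n) this
    exact ⟨x, hxA, ha⟩
  choose u hu1 hu2 using hmin
  -- key estimate
  have key : ∀ n m : ℕ, n + 1 ≤ m →
      (k/8) * dist (u (n+1)) (u m) ^ p ≤ (R - I n) + 1/((n:ℝ)+2) := by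
    intro n m hnm
    obtain ⟨μ, hμ1, hμ2⟩ := geo (u (n+1)) (u m)
    have hxK : u (n+1) ∈ K := (hu1 (n+1)).1
    have hyK : u m ∈ K := (hu1 m).1
    have hμK : μ ∈ K := hKconv _ hxK _ hyK μ hμ1 hμ2
    have hxA : dist (u (n+1)) (T (u (n+1))) ≤ G (eps n) :=
      le_trans (hu1 (n+1)).2 (eps_G n)
    have hyA : dist (u m) (T (u m)) ≤ G (eps n) :=
      le_trans (hu1 m).2 (le_trans (eps_anti hnm) (eps_G n))
    have hμA : dist μ (T μ) ≤ eps n :=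
      hGP (eps n) (eps_pos n) _ hxK _ hyK hxA hyA μ hμ1 hμ2
    have hμmem : μ ∈ A n := ⟨hμK, hμA⟩
    have hIμ : I n ≤ dist z₀ μ ^ p := csInf_le (hSbd n) ⟨μ, hμmem, rfl⟩
    have hpuc := puc (u (n+1)) (u m) z₀ μ hμ1 hμ2
    have hx2 : dist z₀ (u (n+1)) ^ p < I (n+1) + 1/((n:ℝ)+2) := by
      have := hu2 (n+1)
      have hcast : ((n+1 : ℕ) : ℝ) + 1 = (n:ℝ) + 2 := by push_cast; ring
      rwa [hcast] at this
    have hy2 : dist z₀ (u m) ^ p < I m + 1/((m:ℝ)+1) := hu2 m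
    have h1m : 1/((m:ℝ)+1) ≤ 1/((n:ℝ)+2) := by
      apply one_div_le_one_div_of_le (by positivity)
      have : (n:ℝ) + 1 ≤ (m:ℝ) := by exact_mod_cast hnm
      linarith
    have hxR : I (n+1) ≤ R := hIleR (n+1)
    have hyR : I m ≤ R := hIleR m
    linarith
  -- Cauchy
  have hcauchy : CauchySeq u := by
    rw [Metric.cauchySeq_iff']
    intro ε hε
    have hεp : (0:ℝ) < (k/8) * ε ^ p := by
      have := Real.rpow_pos_of_pos hε p; positivity
    have htend : Tendsto (fun n : ℕ => (R - I n) + 1/((n:ℝ)+2)) atTop (nhds 0) := by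
      have h2 : Tendsto (fun n : ℕ => 1/((n:ℝ)+2)) atTop (nhds 0) := by
        have := (tendsto_one_div_add_atTop_nhds_zero_nat (𝕜 := ℝ)).comp (tendsto_add_atTop_nat 1)
        convert this using 2 with n
        simp only [Function.comp]
        push_cast
        ring
      have h1 : Tendsto (fun n : ℕ => R - I n) atTop (nhds 0) := by
        have := (tendsto_const_nhds (x := R) (f := atTop (α := ℕ))).sub hIR
        simpa using this
      simpa using h1.add h2
    obtain ⟨n, hn⟩ := (htend.eventually (gt_mem_nhds hεp)).exists
    refine ⟨n+1, fun m hm => ?_⟩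
    have hkey := key n m hm
    have hdp : dist (u m) (u (n+1)) ^ p < ε ^ p := by
      rw [dist_comm]
      by_contra hcon
      push_neg at hcon
      have : (k/8) * ε ^ p ≤ (k/8) * dist (u (n+1)) (u m) ^ p :=
        mul_le_mul_of_nonneg_left hcon hk8.le
      linarith
    by_contra hcon
    push_neg at hcon
    exact absurd hdp (not_lt.2 (Real.rpow_le_rpow hε.le hcon hp0.le))
  obtain ⟨w, hw⟩ := cauchySeq_tendsto_of_complete hcauchy
  have hwK : w ∈ K := hKcl.mem_of_tendsto hw (Eventually.of_forall fun n => (hu1 n).1)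
  -- dist (u n) (T (u n)) → 0
  have heps0 : Tendsto eps atTop (nhds 0) := by
    apply squeeze_zero' (Eventually.of_forall fun n => (eps_pos n).le)
      (g := fun n : ℕ => 1/((n:ℝ)))
    · filter_upwards [eventually_ge_atTop 1] with n hn
      obtain ⟨m, rfl⟩ := Nat.exists_eq_add_of_le hn
      have := eps_le m
      calc eps (1 + m) = eps (m+1) := by rw [Nat.add_comm]
        _ ≤ 1/((m:ℝ)+1) := eps_le m
        _ = 1/((1+m : ℕ) : ℝ) := by norm_num [add_comm]
    · exact tendsto_one_div_atTop_nhds_zero_nat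
  have hd0 : Tendsto (fun n => dist (u n) (T (u n))) atTop (nhds 0) :=
    squeeze_zero (fun _ => dist_nonneg) (fun n => (hu1 n).2) heps0
  have hTu : Tendsto (fun n => T (u n)) atTop (nhds (T w)) := by
    have hwithin : Tendsto u atTop (nhdsWithin w K) :=
      tendsto_nhdsWithin_of_tendsto_nhds_of_eventually_within u hw
        (Eventually.of_forall fun n => (hu1 n).1)
    exact ((hTc w hwK).tendsto).comp hwithin
  have hdlim : Tendsto (fun n => dist (u n) (T (u n))) atTop (nhds (dist w (T w))) :=
    hw.dist hTu
  have : dist w (T w) = 0 := tendsto_nhds_unique hdlim hd0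
  exact ⟨w, hwK, (dist_eq_zero.mp this).symm⟩
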